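/- In the rank-2 setting, the cluster variable x''₂ defined by x₂x''₂ = q₃(x'₁)^b + r₃, where the coefficients satisfy r₁r₃ = q₁q₃r₂^b, belongs to ZP[x₁, x'₁, x₂, x'₂]; explicitly x''₂ = q₃r₁^{-1}(x'₁)^b x'₂ − q₁q₃r₁^{-1}((q₂x₂^c + r₂)^b − r₂^b)/x₂, and the last fraction is a polynomial in x₂. -/

import Mathlib

open MvPolynomial

lemma key_identity {F : Type*} [Field F] (A1 B1 A2 B2 A3 B3 x₁ x₂ : F) (b c : ℕ)
    (hx₁ : x₁ ≠ 0) (hx₂ : x₂ ≠ 0) (iB1 : F) (hB1 : B1 * iB1 = 1)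
    (h3 : B3 = A1 * A3 * iB1 * B2 ^ b) :
    (A3 * ((A2 * x₂ ^ c + B2) / x₁) ^ b + B3) / x₂ =
      A3 * iB1 * ((A2 * x₂ ^ c + B2) / x₁) ^ b * ((A1 * x₁ ^ b + B1) / x₂) -
        A1 * A3 * iB1 * (((A2 * x₂ ^ c + B2) ^ b - B2 ^ b) / x₂) := by
  subst h3
  have hB : B1 ≠ 0 := left_ne_zero_of_mul_eq_one hB1
  obtain rfl : iB1 = B1⁻¹ := eq_inv_of_mul_eq_one_right hB1
  rw [div_pow]
  field_simp
  ring

/-- The image of the variable `xᵢ` in the field of rational functions over `R`. -/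
noncomputable def Xfrac (R : Type*) [CommRing R] [IsDomain R] (n : ℕ) (i : Fin n) :
    FractionRing (MvPolynomial (Fin n) R) :=
  algebraMap (MvPolynomial (Fin n) R) _ (MvPolynomial.X i)

/-- In the rank-2 setting with exchange relations `x₁ x'₁ = q₂ x₂^c + r₂`,
`x₂ x'₂ = q₁ x₁^b + r₁`, and `x₂ x''₂ = q₃ (x'₁)^b + r₃` where `r₁ r₃ = q₁ q₃ r₂^b`,
the variable `x''₂` lies in `ZP[x₁, x'₁, x₂, x'₂]`; explicitly
`x''₂ = q₃ r₁⁻¹ (x'₁)^b x'₂ − q₁ q₃ r₁⁻¹ ((q₂ x₂^c + r₂)^b − r₂^b)/x₂`, the last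
fraction being a polynomial in `x₂`. -/
theorem double_mutation_in_lower_bound (R : Type*) [CommRing R] [IsDomain R]
    (q₁ r₁ q₂ r₂ q₃ r₃ : Rˣ) (b c : ℕ) (hb : 0 < b) (hc : 0 < c)
    (hcoef : (r₁ : R) * r₃ = (q₁ : R) * q₃ * (r₂ : R) ^ b) :
    letI F := FractionRing (MvPolynomial (Fin 2) R)
    let x₁ : F := Xfrac R 2 0
    let x₂ : F := Xfrac R 2 1
    let a : R → F := algebraMap R F
    let x₁' : F := (a (q₂ : R) * x₂ ^ c + a (r₂ : R)) / x₁
    let x₂' : F := (a (q₁ : R) * x₁ ^ b + a (r₁ : R)) / x₂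
    let x₂'' : F := (a (q₃ : R) * x₁' ^ b + a (r₃ : R)) / x₂
    x₂'' ∈ Algebra.adjoin R ({x₁, x₁', x₂, x₂'} : Set (FractionRing (MvPolynomial (Fin 2) R))) ∧
    x₂'' = a (q₃ : R) * (a (r₁ : R))⁻¹ * x₁' ^ b * x₂' -
      a (q₁ : R) * a (q₃ : R) * (a (r₁ : R))⁻¹ *
        (((a (q₂ : R) * x₂ ^ c + a (r₂ : R)) ^ b - a (r₂ : R) ^ b) / x₂) ∧
    ∃ f : Polynomial R,
      ((a (q₂ : R) * x₂ ^ c + a (r₂ : R)) ^ b - a (r₂ : R) ^ b) / x₂ =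
        Polynomial.aeval x₂ f := by
  intro x₁ x₂ a x₁' x₂' x₂''
  have hX : ∀ i : Fin 2, Xfrac R 2 i ≠ 0 := fun i =>
    (map_ne_zero_iff _ (IsFractionRing.injective (MvPolynomial (Fin 2) R)
      (FractionRing (MvPolynomial (Fin 2) R)))).2 (MvPolynomial.X_ne_zero i)
  have hx₁ : x₁ ≠ 0 := hX 0
  have hx₂ : x₂ ≠ 0 := hX 1
  have ha : ∀ u : Rˣ, a (u : R) * a ((u⁻¹ : Rˣ) : R) = 1 := fun u => by
    show algebraMap R _ _ * algebraMap R _ _ = 1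
    rw [← map_mul, Units.mul_inv, map_one]
  have har : (a (r₁ : R))⁻¹ = a ((r₁⁻¹ : Rˣ) : R) :=
    (eq_inv_of_mul_eq_one_left (by rw [mul_comm]; exact ha r₁)).symm
  have h3R : (r₃ : R) = (q₁ : R) * q₃ * ((r₁⁻¹ : Rˣ) : R) * (r₂ : R) ^ b := by
    have h2 : ((r₁⁻¹ : Rˣ) : R) * (r₁ : R) = 1 := by
      simp
    linear_combination ((r₁⁻¹ : Rˣ) : R) * hcoef - (r₃ : R) * h2
  have h3 : a (r₃ : R) = a (q₁ : R) * a (q₃ : R) * a ((r₁⁻¹ : Rˣ) : R) * a (r₂ : R) ^ b := by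
    have := congrArg (algebraMap R (FractionRing (MvPolynomial (Fin 2) R))) h3R
    simpa only [map_mul, map_pow] using this
  -- the polynomial
  set g : Polynomial R :=
    (Polynomial.C (q₂ : R) * Polynomial.X ^ c + Polynomial.C (r₂ : R)) ^ b -
      Polynomial.C ((r₂ : R) ^ b) with hg
  have hdvd : Polynomial.X ∣ g := by
    rw [Polynomial.X_dvd_iff, Polynomial.coeff_zero_eq_eval_zero]
    simp [hg, zero_pow hc.ne']
  obtain ⟨f, hf⟩ := hdvd
  have hgf : ((a (q₂ : R) * x₂ ^ c + a (r₂ : R)) ^ b - a (r₂ : R) ^ b) / x₂ =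
      Polynomial.aeval x₂ f := by
    have h1 : Polynomial.aeval x₂ g = x₂ * Polynomial.aeval x₂ f := by
      rw [hf, map_mul, Polynomial.aeval_X]
    have hg' : Polynomial.aeval x₂ g =
        (a (q₂ : R) * x₂ ^ c + a (r₂ : R)) ^ b - a (r₂ : R) ^ b := by
      simp [hg, Polynomial.aeval_C, map_pow]
      rfl
    rw [div_eq_iff hx₂, ← hg', h1, mul_comm]
  have heq : x₂'' = a (q₃ : R) * (a (r₁ : R))⁻¹ * x₁' ^ b * x₂' -
      a (q₁ : R) * a (q₃ : R) * (a (r₁ : R))⁻¹ *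
        (((a (q₂ : R) * x₂ ^ c + a (r₂ : R)) ^ b - a (r₂ : R) ^ b) / x₂) := by
    rw [har]
    exact key_identity (a (q₁ : R)) (a (r₁ : R)) (a (q₂ : R)) (a (r₂ : R)) (a (q₃ : R))
      (a (r₃ : R)) x₁ x₂ b c hx₁ hx₂ (a ((r₁⁻¹ : Rˣ) : R)) (ha r₁) h3
  refine ⟨?_, heq, f, hgf⟩
  rw [heq, har, hgf]
  have hmem : ∀ r : R, a r ∈ Algebra.adjoin R ({x₁, x₁', x₂, x₂'} : Set (FractionRing (MvPolynomial (Fin 2) R))) := fun r =>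
    Subalgebra.algebraMap_mem _ r
  have hx₁'m : x₁' ∈ Algebra.adjoin R ({x₁, x₁', x₂, x₂'} : Set (FractionRing (MvPolynomial (Fin 2) R))) :=
    Algebra.subset_adjoin (by simp)
  have hx₂'m : x₂' ∈ Algebra.adjoin R ({x₁, x₁', x₂, x₂'} : Set (FractionRing (MvPolynomial (Fin 2) R))) :=
    Algebra.subset_adjoin (by simp)
  have hfm : Polynomial.aeval x₂ f ∈ Algebra.adjoin R ({x₁, x₁', x₂, x₂'} : Set (FractionRing (MvPolynomial (Fin 2) R))) :=
    Algebra.adjoin_mono (Set.singleton_subset_iff.2 (by simp))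
      (Polynomial.aeval_mem_adjoin_singleton R x₂)
  exact sub_mem (mul_mem (mul_mem (mul_mem (hmem _) (hmem _)) (pow_mem hx₁'m b)) hx₂'m)
    (mul_mem (mul_mem (mul_mem (hmem _) (hmem _)) (hmem _)) hfm)
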